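/- Let n ≥ 3, α ∈ (2/n, 1], R > 0, T > 0, and c a constant with c − 1 > (2/α)·1/(n − 2/α). Let Ψ(x,t) = C_α ((T − ct)/(|x|² + R²))^{1/α} with C_α^α = 2 n^{α−1}(n − 2/α), and let A_i (1 ≤ i ≤ 2n) and B_i (with B_{i+n} = B_i) be the associated first and second order correction coefficients: A_i = −(n/Ψ)^α D_{v_i}Ψ and B_i = (n/Ψ)^α ∂_{x_i}((n/Ψ)^α ∂_{x_i}Ψ) − (α/(2Ψ))((n/Ψ)^α ∂_{x_i}Ψ)² for 1 ≤ i ≤ n. Then there exists a constant c₀ > 0 depending only on n, α, c such that for all x ∈ ℝⁿ, 0 ≤ t < T/c, and all i: |A_i| ≤ c₀ (Ψ/(T−ct)) (|x|²+R²)^{1/2}, |∂_t A_i| ≤ c₀ (Ψ/(T−ct)²) (|x|²+R²)^{1/2}, |B_i| ≤ c₀ (Ψ/(T−ct)²) (|x|²+R²), |D_{v_i} B_i| ≤ c₀ (Ψ/(T−ct)²) (|x|²+R²)^{1/2}, |∂_t B_i| ≤ c₀ (Ψ/(T−ct)³) (|x|²+R²), |Ψ^α A_i| ≤ c₀ Ψ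 (|x|²+R²)^{−1/2}, and |Ψ^α B_i| ≤ c₀ Ψ/(T−ct). -/

import Mathlib

/-- Partial derivative in the `i`-th coordinate direction. -/
noncomputable def pd {n : ℕ} (i : Fin n) (f : EuclideanSpace ℝ (Fin n) → ℝ)
    (x : EuclideanSpace ℝ (Fin n)) : ℝ :=
  fderiv ℝ f x (EuclideanSpace.single i (1 : ℝ))

open Real

lemma coord_abs_le_norm {n : ℕ} (x : EuclideanSpace ℝ (Fin n)) (i : Fin n) : |x i| ≤ ‖x‖ := by
  rw [EuclideanSpace.norm_eq]
  have h1 : |x i| = Real.sqrt (‖x i‖ ^ 2) := by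
    rw [Real.sqrt_sq_eq_abs]; simp
  rw [h1]
  apply Real.sqrt_le_sqrt
  exact Finset.single_le_sum (f := fun j => ‖x j‖ ^ 2) (fun j _ => by positivity)
    (Finset.mem_univ i)

lemma hasFDerivAt_normSq {n : ℕ} (x : EuclideanSpace ℝ (Fin n)) :
    HasFDerivAt (fun y : EuclideanSpace ℝ (Fin n) => ‖y‖ ^ 2) ((2 : ℝ) • innerSL ℝ x) x := by
  have h := (hasFDerivAt_id (𝕜 := ℝ) x).inner ℝ (hasFDerivAt_id x)
  have hfun : (fun y : EuclideanSpace ℝ (Fin n) => ‖y‖ ^ 2)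
      = fun y => (inner ℝ y y : ℝ) := funext fun y => (real_inner_self_eq_norm_sq y).symm
  rw [hfun]
  refine h.congr_fderiv ?_
  ext v
  simp [fderivInnerCLM_apply, real_inner_comm, two_mul]

lemma pd_exists {n : ℕ} (R C p : ℝ) (m : ℕ) (x : EuclideanSpace ℝ (Fin n)) (i : Fin n)
    (hq : ‖x‖ ^ 2 + R ^ 2 ≠ 0) :
    ∃ L : EuclideanSpace ℝ (Fin n) →L[ℝ] ℝ,
      HasFDerivAt (fun y : EuclideanSpace ℝ (Fin n) =>
        C * ((y i) ^ m * (‖y‖ ^ 2 + R ^ 2) ^ p)) L x ∧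
      L (EuclideanSpace.single i 1) =
        C * ((m * (x i) ^ (m - 1)) * (‖x‖ ^ 2 + R ^ 2) ^ p
          + (x i) ^ m * (p * (‖x‖ ^ 2 + R ^ 2) ^ (p - 1)) * (2 * x i)) := by
  have h1 : HasFDerivAt (fun y : EuclideanSpace ℝ (Fin n) => (y i) ^ m)
      (((m : ℝ) * (x i) ^ (m - 1)) • (EuclideanSpace.proj i
        : EuclideanSpace ℝ (Fin n) →L[ℝ] ℝ)) x := by
    have := (hasDerivAt_pow m (x i)).comp_hasFDerivAt x
      ((EuclideanSpace.proj i : EuclideanSpace ℝ (Fin n) →L[ℝ] ℝ).hasFDerivAt (x := x))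
    exact this
  have h2 : HasFDerivAt (fun y : EuclideanSpace ℝ (Fin n) => (‖y‖ ^ 2 + R ^ 2) ^ p)
      ((p * (‖x‖ ^ 2 + R ^ 2) ^ (p - 1)) • ((2 : ℝ) • innerSL ℝ x)) x :=
    ((hasFDerivAt_normSq x).add_const (R ^ 2)).rpow_const (Or.inl hq)
  have h3 := (h1.mul h2).const_mul C
  refine ⟨_, h3, ?_⟩
  have hsing : (inner ℝ x (EuclideanSpace.single i (1:ℝ)) : ℝ) = x i := by
    rw [EuclideanSpace.inner_single_right]; simp
  simp [ContinuousLinearMap.smul_apply, ContinuousLinearMap.add_apply, hsing]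
  ring

lemma hasDerivAt_tau (T c C p t : ℝ) (hτ : T - c * t ≠ 0) :
    HasDerivAt (fun s => C * (T - c * s) ^ p)
      (C * ((-c) * p * (T - c * t) ^ (p - 1))) t := by
  have h0 : HasDerivAt (fun s : ℝ => T - c * s) (-c) t := by
    exact ((hasDerivAt_const t T).sub ((hasDerivAt_id t).const_mul c)).congr_deriv (by simp)
  exact (h0.rpow_const (Or.inl hτ)).const_mul C


lemma algA (β N M₀ K Cα P Q q τ u : ℝ) (hM₀ : M₀ ≠ 0) (hτ : τ ≠ 0) (hq : q ≠ 0)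
    (hK : K = 2 * N * β / M₀) :
    -(N * q / (M₀ * τ)) * (Cα * (P * τ) * (-β * (Q * q⁻¹)) * (2 * u))
      = K * Cα * P * u * Q := by
  subst hK; field_simp

lemma algB (α β N M₀ K a b Cα P Q q τ u : ℝ)
    (hM₀ : M₀ ≠ 0) (hτ : τ ≠ 0) (hq : q ≠ 0) (hCα : Cα ≠ 0) (hP : P ≠ 0) (hQ : Q ≠ 0)
    (hK : K = 2 * N * β / M₀) (ha : a = -(K * N / M₀))
    (hb : b = 2 * β * K * N / M₀ - α * K ^ 2 / 2) :
    N * q / (M₀ * τ) * (-(K * Cα * (P * τ)) *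
        ((↑(1:ℕ) : ℝ) * u ^ (1 - 1) * Q + u ^ 1 * (-β * (Q * q⁻¹)) * (2 * u)))
      - α / (2 * (Cα * (P * τ * τ) * Q)) * (-(K * Cα * (P * τ) * u * Q)) ^ 2
      = Cα * P * Q * (a * q + b * u ^ 2) := by
  subst hK ha hb
  field_simp
  ring

set_option maxHeartbeats 2000000 in
/-- Uniform bounds on the correction coefficients `A_i`, `B_i` of the barrier
`Ψ(x,t) = C_α ((T−ct)/(|x|²+R²))^{1/α}`: there is a constant `c₀ > 0`
depending only on `n, α, c` (in particular independent of `R`, `T`, `ε`) such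
that on `0 ≤ t < T/c` the stated bounds on `|A_i|, |∂_t A_i|, |B_i|,
|D_{v_i}B_i|, |∂_t B_i|, |Ψ^α A_i|, |Ψ^α B_i|` hold.  (For `1 ≤ i ≤ n`;
the coefficients with index `i+n` are `A_{i+n} = −A_i`, `B_{i+n} = B_i`,
whose bounds are the same in absolute value.) -/
theorem correction_coefficients_bounds (n : ℕ) (hn : 3 ≤ n) (α c : ℝ)
    (hα : 2 / (n : ℝ) < α ∧ α ≤ 1)
    (hc : c - 1 > (2 / α) * (1 / ((n : ℝ) - 2 / α))) :
    ∃ c₀ > (0 : ℝ), ∀ (R T Cα : ℝ), 0 < R → 0 < T → 0 < Cα →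
      Cα ^ α = 2 * (n : ℝ) ^ (α - 1) * ((n : ℝ) - 2 / α) →
      ∀ Ψ : EuclideanSpace ℝ (Fin n) → ℝ → ℝ,
      (∀ x s, Ψ x s = Cα * ((T - c * s) / (‖x‖ ^ 2 + R ^ 2)) ^ (1 / α)) →
      ∀ A B : Fin n → EuclideanSpace ℝ (Fin n) → ℝ → ℝ,
      (∀ (i : Fin n) x s,
        A i x s = -(((n : ℝ) / Ψ x s) ^ α) * pd i (fun z => Ψ z s) x) →
      (∀ (i : Fin n) x s,
        B i x s = ((n : ℝ) / Ψ x s) ^ α *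
            pd i (fun y => ((n : ℝ) / Ψ y s) ^ α * pd i (fun z => Ψ z s) y) x -
          (α / (2 * Ψ x s)) *
            (((n : ℝ) / Ψ x s) ^ α * pd i (fun z => Ψ z s) x) ^ 2) →
      ∀ (x : EuclideanSpace ℝ (Fin n)) (t : ℝ) (i : Fin n), 0 ≤ t → t < T / c →
        |A i x t| ≤ c₀ * (Ψ x t / (T - c * t)) * (‖x‖ ^ 2 + R ^ 2) ^ ((1 : ℝ) / 2) ∧
        |deriv (fun s => A i x s) t| ≤
          c₀ * (Ψ x t / (T - c * t) ^ 2) * (‖x‖ ^ 2 + R ^ 2) ^ ((1 : ℝ) / 2) ∧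
        |B i x t| ≤ c₀ * (Ψ x t / (T - c * t) ^ 2) * (‖x‖ ^ 2 + R ^ 2) ∧
        |pd i (fun y => B i y t) x| ≤
          c₀ * (Ψ x t / (T - c * t) ^ 2) * (‖x‖ ^ 2 + R ^ 2) ^ ((1 : ℝ) / 2) ∧
        |deriv (fun s => B i x s) t| ≤
          c₀ * (Ψ x t / (T - c * t) ^ 3) * (‖x‖ ^ 2 + R ^ 2) ∧
        |(Ψ x t) ^ α * A i x t| ≤ c₀ * Ψ x t * (‖x‖ ^ 2 + R ^ 2) ^ (-(1 : ℝ) / 2) ∧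
        |(Ψ x t) ^ α * B i x t| ≤ c₀ * Ψ x t / (T - c * t) := by
  obtain ⟨hα1, hα2⟩ := hα
  have hn0 : (0 : ℝ) < n := by
    have : (3 : ℝ) ≤ n := by exact_mod_cast hn
    linarith
  have hαpos : 0 < α := lt_trans (div_pos two_pos hn0) hα1
  obtain ⟨β, hβ⟩ : ∃ β : ℝ, β = 1 / α := ⟨_, rfl⟩
  have hβ1 : 1 ≤ β := by rw [hβ, le_div_iff₀ hαpos, one_mul]; exact hα2
  have hβpos : 0 < β := lt_of_lt_of_le one_pos hβ1
  have hνpos : 0 < (n : ℝ) - 2 / α := by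
    have h2 : 2 < α * n := (div_lt_iff₀ hn0).mp hα1
    rw [sub_pos, div_lt_iff₀ hαpos]
    linarith [h2, mul_comm α (n : ℝ)]
  have hc1 : 1 < c := by
    have hpos : 0 < (2 / α) * (1 / ((n : ℝ) - 2 / α)) :=
      mul_pos (div_pos two_pos hαpos) (div_pos one_pos hνpos)
    linarith
  have hcpos : (0 : ℝ) < c := lt_trans one_pos hc1
  obtain ⟨N, hN⟩ : ∃ N : ℝ, N = (n : ℝ) ^ α := ⟨_, rfl⟩
  have hNpos : 0 < N := by rw [hN]; exact rpow_pos_of_pos hn0 α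
  obtain ⟨M₀, hM₀⟩ : ∃ M : ℝ, M = 2 * (n : ℝ) ^ (α - 1) * ((n : ℝ) - 2 / α) := ⟨_, rfl⟩
  have hM₀pos : 0 < M₀ := by
    rw [hM₀]; exact mul_pos (mul_pos two_pos (rpow_pos_of_pos hn0 _)) hνpos
  obtain ⟨K, hK⟩ : ∃ K : ℝ, K = 2 * N * β / M₀ := ⟨_, rfl⟩
  have hKpos : 0 < K := by
    rw [hK]; exact div_pos (mul_pos (mul_pos two_pos hNpos) hβpos) hM₀pos
  obtain ⟨a, ha⟩ : ∃ a : ℝ, a = -(K * N / M₀) := ⟨_, rfl⟩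
  obtain ⟨b, hb⟩ : ∃ b : ℝ, b = 2 * β * K * N / M₀ - α * K ^ 2 / 2 := ⟨_, rfl⟩
  obtain ⟨c₀, hc₀⟩ : ∃ c₀ : ℝ, c₀ = K + c * (β - 1) * K + (|a| + |b|)
      + (2 * |a| * (β - 1) + 2 * |b| + 2 * β * |b|)
      + c * |β - 2| * (|a| + |b|) + M₀ * K + M₀ * (|a| + |b|) + 1 := ⟨_, rfl⟩
  have hnn1 : 0 ≤ c * (β - 1) * K :=
    mul_nonneg (mul_nonneg hcpos.le (by linarith)) hKpos.le
  have hnn2 : 0 ≤ |a| + |b| := add_nonneg (abs_nonneg a) (abs_nonneg b)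
  have hnn3 : 0 ≤ 2 * |a| * (β - 1) + 2 * |b| + 2 * β * |b| := by
    have h1 : 0 ≤ 2 * |a| * (β - 1) :=
      mul_nonneg (mul_nonneg (by norm_num) (abs_nonneg a)) (by linarith)
    have h2 : 0 ≤ 2 * β * |b| :=
      mul_nonneg (mul_nonneg (by norm_num) hβpos.le) (abs_nonneg b)
    have h3 : 0 ≤ 2 * |b| := mul_nonneg (by norm_num) (abs_nonneg b)
    linarith
  have hnn4 : 0 ≤ c * |β - 2| * (|a| + |b|) :=
    mul_nonneg (mul_nonneg hcpos.le (abs_nonneg _)) hnn2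
  have hnn5 : 0 ≤ M₀ * K := mul_nonneg hM₀pos.le hKpos.le
  have hnn6 : 0 ≤ M₀ * (|a| + |b|) := mul_nonneg hM₀pos.le hnn2
  refine ⟨c₀, by rw [hc₀]; linarith [hKpos], ?_⟩
  intro R T Cα hR hT hCα hMeq Ψ hΨ A B hA hB x t i ht0 ht1
  rw [← hM₀] at hMeq
  simp only [← hβ] at hΨ
  have hτ : 0 < T - c * t := by
    have h := (lt_div_iff₀ hcpos).mp ht1
    have h2 : t * c = c * t := mul_comm t c
    linarith
  have hqy : ∀ y : EuclideanSpace ℝ (Fin n), 0 < ‖y‖ ^ 2 + R ^ 2 := fun y => by positivity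
  have hq := hqy x
  -- closed form of Ψ
  have hΨval : ∀ (y : EuclideanSpace ℝ (Fin n)) (s : ℝ), 0 ≤ T - c * s →
      Ψ y s = (Cα * (T - c * s) ^ β) * (‖y‖ ^ 2 + R ^ 2) ^ (-β) := by
    intro y s hs
    rw [hΨ, Real.div_rpow hs (hqy y).le, Real.rpow_neg (hqy y).le, div_eq_mul_inv]
    ring
  -- spatial derivative of Ψ
  have hpdΨ : ∀ (y : EuclideanSpace ℝ (Fin n)) (s : ℝ), 0 ≤ T - c * s →
      pd i (fun z => Ψ z s) y
        = (Cα * (T - c * s) ^ β) * ((-β) * (‖y‖ ^ 2 + R ^ 2) ^ (-β - 1)) * (2 * y i) := by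
    intro y s hs
    obtain ⟨L, hL, hLv⟩ := pd_exists R (Cα * (T - c * s) ^ β) (-β) 0 y i (hqy y).ne'
    have hfe : (fun z => Ψ z s)
        = fun z : EuclideanSpace ℝ (Fin n) =>
            (Cα * (T - c * s) ^ β) * ((z i) ^ 0 * (‖z‖ ^ 2 + R ^ 2) ^ (-β)) := by
      funext z; rw [hΨval z s hs]; simp
    rw [pd, hfe, hL.fderiv, hLv]
    simp
    ring
  -- Ψ^α
  have hΨalpha : ∀ (y : EuclideanSpace ℝ (Fin n)) (s : ℝ), 0 < T - c * s →
      (Ψ y s) ^ α = M₀ * ((T - c * s) * (‖y‖ ^ 2 + R ^ 2)⁻¹) := by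
    intro y s hs
    have hτβ : (0 : ℝ) < (T - c * s) ^ β := rpow_pos_of_pos hs β
    have hQ : (0 : ℝ) < (‖y‖ ^ 2 + R ^ 2) ^ (-β) := rpow_pos_of_pos (hqy y) _
    rw [hΨval y s hs.le, Real.mul_rpow (mul_pos hCα hτβ).le hQ.le,
      Real.mul_rpow hCα.le hτβ.le, ← Real.rpow_mul hs.le, ← Real.rpow_mul (hqy y).le,
      show β * α = 1 by rw [hβ]; field_simp,
      show (-β) * α = -1 by rw [hβ]; field_simp,
      Real.rpow_one, Real.rpow_neg_one, hMeq]
    ring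
  -- (n/Ψ)^α
  have hΨpowα : ∀ (y : EuclideanSpace ℝ (Fin n)) (s : ℝ), 0 < T - c * s →
      ((n : ℝ) / Ψ y s) ^ α = N * (‖y‖ ^ 2 + R ^ 2) / (M₀ * (T - c * s)) := by
    intro y s hs
    have hτβ : (0 : ℝ) < (T - c * s) ^ β := rpow_pos_of_pos hs β
    have hQ : (0 : ℝ) < (‖y‖ ^ 2 + R ^ 2) ^ (-β) := rpow_pos_of_pos (hqy y) _
    have hΨpos : 0 < Ψ y s := by
      rw [hΨval y s hs.le]; exact mul_pos (mul_pos hCα hτβ) hQ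
    rw [Real.div_rpow (by positivity) hΨpos.le, hΨalpha y s hs, ← hN]
    field_simp
  -- closed form of A
  have hAform : ∀ (y : EuclideanSpace ℝ (Fin n)) (s : ℝ), 0 < T - c * s →
      A i y s = (K * Cα * (T - c * s) ^ (β - 1)) * (y i) * (‖y‖ ^ 2 + R ^ 2) ^ (-β) := by
    intro y s hs
    rw [hA, hpdΨ y s hs.le, hΨpowα y s hs]
    have hτ1 : (T - c * s) ^ β = (T - c * s) ^ (β - 1) * (T - c * s) := by
      rw [← Real.rpow_add_one hs.ne' (β - 1), sub_add_cancel]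
    have hq1 : (‖y‖ ^ 2 + R ^ 2) ^ (-β - 1)
        = (‖y‖ ^ 2 + R ^ 2) ^ (-β) * (‖y‖ ^ 2 + R ^ 2)⁻¹ := by
      rw [show (-β - 1 : ℝ) = -β + (-1) by ring, Real.rpow_add (hqy y), Real.rpow_neg_one]
    rw [hτ1, hq1]
    exact algA β N M₀ K Cα _ _ _ _ (y i) hM₀pos.ne' hs.ne' (hqy y).ne' hK
  -- the function G
  have hGfun : ∀ s : ℝ, 0 < T - c * s →
      (fun y : EuclideanSpace ℝ (Fin n) => ((n : ℝ) / Ψ y s) ^ α * pd i (fun z => Ψ z s) y)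
        = fun y : EuclideanSpace ℝ (Fin n) =>
            (-(K * Cα * (T - c * s) ^ (β - 1))) * ((y i) ^ 1 * (‖y‖ ^ 2 + R ^ 2) ^ (-β)) := by
    intro s hs; funext y
    have hg : ((n : ℝ) / Ψ y s) ^ α * pd i (fun z => Ψ z s) y = -(A i y s) := by
      rw [hA]; ring
    rw [hg, hAform y s hs]; ring
  -- closed form of B
  have hBform : ∀ (y : EuclideanSpace ℝ (Fin n)) (s : ℝ), 0 < T - c * s →
      B i y s = Cα * (T - c * s) ^ (β - 2) * (‖y‖ ^ 2 + R ^ 2) ^ (-β)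
        * (a * (‖y‖ ^ 2 + R ^ 2) + b * (y i) ^ 2) := by
    intro y s hs
    obtain ⟨L, hL, hLv⟩ :=
      pd_exists R (-(K * Cα * (T - c * s) ^ (β - 1))) (-β) 1 y i (hqy y).ne'
    have hpdG : pd i (fun z => ((n : ℝ) / Ψ z s) ^ α * pd i (fun w => Ψ w s) z) y
        = L (EuclideanSpace.single i 1) := by
      rw [pd, hGfun s hs, hL.fderiv]
    have hgx : ((n : ℝ) / Ψ y s) ^ α * pd i (fun z => Ψ z s) y = -(A i y s) := by
      rw [hA]; ring
    rw [hB, hpdG, hLv, hgx, hAform y s hs, hΨpowα y s hs, hΨval y s hs.le]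
    have e1 : (T - c * s) ^ (β - 1) = (T - c * s) ^ (β - 2) * (T - c * s) := by
      rw [← Real.rpow_add_one hs.ne' (β - 2)]; congr 1; ring
    have e2 : (T - c * s) ^ β = (T - c * s) ^ (β - 2) * (T - c * s) * (T - c * s) := by
      rw [← Real.rpow_add_one hs.ne' (β - 2), ← Real.rpow_add_one hs.ne']; congr 1; ring
    have e3 : (‖y‖ ^ 2 + R ^ 2) ^ (-β - 1)
        = (‖y‖ ^ 2 + R ^ 2) ^ (-β) * (‖y‖ ^ 2 + R ^ 2)⁻¹ := by
      rw [show (-β - 1 : ℝ) = -β + (-1) by ring, Real.rpow_add (hqy y), Real.rpow_neg_one]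
    have hP2' : (0 : ℝ) < (T - c * s) ^ (β - 2) := rpow_pos_of_pos hs _
    have hQ' : (0 : ℝ) < (‖y‖ ^ 2 + R ^ 2) ^ (-β) := rpow_pos_of_pos (hqy y) _
    rw [e1, e2, e3]
    exact algB α β N M₀ K a b Cα _ _ _ _ (y i) hM₀pos.ne' hs.ne' (hqy y).ne' hCα.ne'
      hP2'.ne' hQ'.ne' hK ha hb
  -- abbreviations at the point (x, t)
  obtain ⟨P1, hP1d⟩ : ∃ r : ℝ, r = (T - c * t) ^ (β - 1) := ⟨_, rfl⟩
  obtain ⟨P2, hP2d⟩ : ∃ r : ℝ, r = (T - c * t) ^ (β - 2) := ⟨_, rfl⟩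
  obtain ⟨P3, hP3d⟩ : ∃ r : ℝ, r = (T - c * t) ^ (β - 3) := ⟨_, rfl⟩
  obtain ⟨Pβ, hPβd⟩ : ∃ r : ℝ, r = (T - c * t) ^ β := ⟨_, rfl⟩
  obtain ⟨S, hSd⟩ : ∃ r : ℝ, r = (‖x‖ ^ 2 + R ^ 2) ^ ((1 : ℝ) / 2) := ⟨_, rfl⟩
  obtain ⟨Q, hQd⟩ : ∃ r : ℝ, r = (‖x‖ ^ 2 + R ^ 2) ^ (-β) := ⟨_, rfl⟩
  have hP1p : 0 < P1 := by rw [hP1d]; exact rpow_pos_of_pos hτ _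
  have hP2p : 0 < P2 := by rw [hP2d]; exact rpow_pos_of_pos hτ _
  have hP3p : 0 < P3 := by rw [hP3d]; exact rpow_pos_of_pos hτ _
  have hPβp : 0 < Pβ := by rw [hPβd]; exact rpow_pos_of_pos hτ _
  have hQp : 0 < Q := by rw [hQd]; exact rpow_pos_of_pos hq _
  have hSpos : 0 < S := by rw [hSd]; exact rpow_pos_of_pos hq _
  have eβ1 : Pβ = P1 * (T - c * t) := by
    rw [hPβd, hP1d, ← Real.rpow_add_one hτ.ne']; congr 1; ring
  have eβ2 : P1 = P2 * (T - c * t) := by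
    rw [hP1d, hP2d, ← Real.rpow_add_one hτ.ne']; congr 1; ring
  have eβ3 : P2 = P3 * (T - c * t) := by
    rw [hP2d, hP3d, ← Real.rpow_add_one hτ.ne']; congr 1; ring
  have hΨx : Ψ x t = Cα * Pβ * Q := by rw [hΨval x t hτ.le, ← hPβd, ← hQd]
  have hΨpos : 0 < Ψ x t := by
    rw [hΨx]; exact mul_pos (mul_pos hCα hPβp) hQp
  have hr1 : Ψ x t / (T - c * t) = Cα * P1 * Q := by
    rw [hΨx, eβ1]; field_simp
  have hr2 : Ψ x t / (T - c * t) ^ 2 = Cα * P2 * Q := by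
    rw [hΨx, eβ1, eβ2]; field_simp
  have hr3 : Ψ x t / (T - c * t) ^ 3 = Cα * P3 * Q := by
    rw [hΨx, eβ1, eβ2, eβ3]; field_simp
  have hS2 : S ^ 2 = ‖x‖ ^ 2 + R ^ 2 := by
    rw [hSd, ← Real.rpow_natCast ((‖x‖ ^ 2 + R ^ 2) ^ ((1 : ℝ) / 2)) 2,
      ← Real.rpow_mul hq.le]
    norm_num
  have hxS : |x i| ≤ S := by
    refine le_trans (coord_abs_le_norm x i) ?_
    have hS' : S = Real.sqrt (‖x‖ ^ 2 + R ^ 2) := by rw [hSd, Real.sqrt_eq_rpow]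
    rw [hS']
    have h1 : ‖x‖ ^ 2 ≤ ‖x‖ ^ 2 + R ^ 2 := by have := sq_nonneg R; linarith
    calc ‖x‖ = Real.sqrt (‖x‖ ^ 2) := (Real.sqrt_sq (norm_nonneg x)).symm
      _ ≤ Real.sqrt (‖x‖ ^ 2 + R ^ 2) := Real.sqrt_le_sqrt h1
  have hxi2 : (x i) ^ 2 ≤ ‖x‖ ^ 2 + R ^ 2 := by
    have h1 : |x i| ^ 2 ≤ S ^ 2 := pow_le_pow_left₀ (abs_nonneg _) hxS 2
    rw [sq_abs, hS2] at h1
    exact h1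
  have habq : |a * (‖x‖ ^ 2 + R ^ 2) + b * (x i) ^ 2|
      ≤ (|a| + |b|) * (‖x‖ ^ 2 + R ^ 2) := by
    calc |a * (‖x‖ ^ 2 + R ^ 2) + b * (x i) ^ 2|
        ≤ |a * (‖x‖ ^ 2 + R ^ 2)| + |b * (x i) ^ 2| := abs_add_le _ _
      _ = |a| * (‖x‖ ^ 2 + R ^ 2) + |b| * (x i) ^ 2 := by
          rw [abs_mul, abs_mul, abs_of_pos hq, abs_of_nonneg (sq_nonneg (x i))]
      _ ≤ |a| * (‖x‖ ^ 2 + R ^ 2) + |b| * (‖x‖ ^ 2 + R ^ 2) := by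
          have := mul_le_mul_of_nonneg_left hxi2 (abs_nonneg b); linarith
      _ = (|a| + |b|) * (‖x‖ ^ 2 + R ^ 2) := by ring
  have hop : ∀ᶠ s in nhds t, 0 < T - c * s := by
    have hcont : Continuous fun s : ℝ => T - c * s := by continuity
    exact hcont.continuousAt.eventually (eventually_gt_nhds hτ)
  refine ⟨?_, ?_, ?_, ?_, ?_, ?_, ?_⟩
  · -- bound on |A|
    have hAv : A i x t = (K * Cα * P1) * (x i) * Q := by
      rw [hAform x t hτ, ← hP1d, ← hQd]
    have hZ : 0 < Cα * P1 * Q := mul_pos (mul_pos hCα hP1p) hQp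
    have hKc : K ≤ c₀ := by rw [hc₀]; linarith
    rw [hAv, hr1, ← hSd]
    calc |K * Cα * P1 * (x i) * Q|
        = (K * (Cα * P1 * Q)) * |x i| := by
          rw [show K * Cα * P1 * (x i) * Q = (K * (Cα * P1 * Q)) * (x i) by ring,
            abs_mul, abs_of_pos (mul_pos hKpos hZ)]
      _ ≤ (K * (Cα * P1 * Q)) * S :=
          mul_le_mul_of_nonneg_left hxS (mul_pos hKpos hZ).le
      _ = K * ((Cα * P1 * Q) * S) := by ring
      _ ≤ c₀ * ((Cα * P1 * Q) * S) :=
          mul_le_mul_of_nonneg_right hKc (mul_pos hZ hSpos).le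
      _ = c₀ * (Cα * P1 * Q) * S := by ring
  · -- bound on |∂ₜ A|
    have hev : (fun s => A i x s) =ᶠ[nhds t]
        (fun s => (K * Cα * (x i) * Q) * (T - c * s) ^ (β - 1)) :=
      hop.mono fun s hs => by
        show A i x s = (K * Cα * (x i) * Q) * (T - c * s) ^ (β - 1)
        rw [hAform x s hs, ← hQd]; ring
    rw [hev.deriv_eq, (hasDerivAt_tau T c _ (β - 1) t hτ.ne').deriv]
    have e7 : (T - c * t) ^ (β - 1 - 1) = P2 := by rw [hP2d]; congr 1; ring
    rw [e7, hr2, ← hSd]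
    have hZ : 0 < Cα * P2 * Q := mul_pos (mul_pos hCα hP2p) hQp
    have hcb : 0 ≤ c * (β - 1) * K :=
      mul_nonneg (mul_nonneg hcpos.le (by linarith)) hKpos.le
    have hKc : c * (β - 1) * K ≤ c₀ := by rw [hc₀]; linarith
    calc |K * Cα * (x i) * Q * (-c * (β - 1) * P2)|
        = ((c * (β - 1) * K) * (Cα * P2 * Q)) * |x i| := by
          rw [show K * Cα * (x i) * Q * (-c * (β - 1) * P2)
              = -(((c * (β - 1) * K) * (Cα * P2 * Q)) * (x i)) by ring, abs_neg,
            abs_mul, abs_of_nonneg (mul_nonneg hcb hZ.le)]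
      _ ≤ ((c * (β - 1) * K) * (Cα * P2 * Q)) * S :=
          mul_le_mul_of_nonneg_left hxS (mul_nonneg hcb hZ.le)
      _ = (c * (β - 1) * K) * ((Cα * P2 * Q) * S) := by ring
      _ ≤ c₀ * ((Cα * P2 * Q) * S) :=
          mul_le_mul_of_nonneg_right hKc (mul_pos hZ hSpos).le
      _ = c₀ * (Cα * P2 * Q) * S := by ring
  · -- bound on |B|
    have hBv : B i x t = (Cα * P2 * Q) * (a * (‖x‖ ^ 2 + R ^ 2) + b * (x i) ^ 2) := by
      rw [hBform x t hτ, ← hP2d, ← hQd]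
    have hZ : 0 < Cα * P2 * Q := mul_pos (mul_pos hCα hP2p) hQp
    have habc : |a| + |b| ≤ c₀ := by rw [hc₀]; linarith
    rw [hBv, hr2]
    calc |(Cα * P2 * Q) * (a * (‖x‖ ^ 2 + R ^ 2) + b * (x i) ^ 2)|
        = (Cα * P2 * Q) * |a * (‖x‖ ^ 2 + R ^ 2) + b * (x i) ^ 2| := by
          rw [abs_mul, abs_of_pos hZ]
      _ ≤ (Cα * P2 * Q) * ((|a| + |b|) * (‖x‖ ^ 2 + R ^ 2)) :=
          mul_le_mul_of_nonneg_left habq hZ.le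
      _ = (|a| + |b|) * ((Cα * P2 * Q) * (‖x‖ ^ 2 + R ^ 2)) := by ring
      _ ≤ c₀ * ((Cα * P2 * Q) * (‖x‖ ^ 2 + R ^ 2)) :=
          mul_le_mul_of_nonneg_right habc (mul_pos hZ hq).le
      _ = c₀ * (Cα * P2 * Q) * (‖x‖ ^ 2 + R ^ 2) := by ring
  · -- bound on |pd B|
    have hBfun : (fun y => B i y t) = fun y : EuclideanSpace ℝ (Fin n) =>
        (a * Cα * P2) * ((y i) ^ 0 * (‖y‖ ^ 2 + R ^ 2) ^ (1 - β))
          + (b * Cα * P2) * ((y i) ^ 2 * (‖y‖ ^ 2 + R ^ 2) ^ (-β)) := by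
      funext y
      have e4 : (‖y‖ ^ 2 + R ^ 2) ^ (1 - β)
          = (‖y‖ ^ 2 + R ^ 2) * (‖y‖ ^ 2 + R ^ 2) ^ (-β) := by
        rw [show (1 - β : ℝ) = -β + 1 by ring, Real.rpow_add_one (hqy y).ne']; ring
      rw [hBform y t hτ, e4, ← hP2d]; ring
    obtain ⟨L1, hL1, hL1v⟩ := pd_exists R (a * Cα * P2) (1 - β) 0 x i hq.ne'
    obtain ⟨L2, hL2, hL2v⟩ := pd_exists R (b * Cα * P2) (-β) 2 x i hq.ne'
    have hpdB : pd i (fun y => B i y t) x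
        = L1 (EuclideanSpace.single i 1) + L2 (EuclideanSpace.single i 1) := by
      rw [pd, hBfun]; exact congrArg (fun L => L (EuclideanSpace.single i 1)) (hL1.add hL2).fderiv
    have e5 : (‖x‖ ^ 2 + R ^ 2) ^ (1 - β - 1) = Q := by rw [hQd]; congr 1; ring
    have e6 : (‖x‖ ^ 2 + R ^ 2) ^ (-β - 1) = Q * (‖x‖ ^ 2 + R ^ 2)⁻¹ := by
      rw [show (-β - 1 : ℝ) = -β + (-1) by ring, Real.rpow_add hq, Real.rpow_neg_one, hQd]
    have hval : L1 (EuclideanSpace.single i 1) + L2 (EuclideanSpace.single i 1)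
        = (Cα * P2 * Q) * (2 * a * (1 - β) * (x i) + 2 * b * (x i)
            + (-2 * b * β) * ((x i) ^ 3 * (‖x‖ ^ 2 + R ^ 2)⁻¹)) := by
      rw [hL1v, hL2v, e5, e6, ← hQd]
      push_cast
      ring
    rw [hpdB, hval, hr2, ← hSd]
    have hZ : 0 < Cα * P2 * Q := mul_pos (mul_pos hCα hP2p) hQp
    have h4a : |2 * a * (1 - β) * (x i)| ≤ 2 * |a| * (β - 1) * S := by
      calc |2 * a * (1 - β) * (x i)| = (2 * |a| * (β - 1)) * |x i| := by
            rw [abs_mul, abs_mul, abs_mul, abs_of_nonpos (by linarith : (1 - β : ℝ) ≤ 0),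
              abs_two]
            ring
        _ ≤ (2 * |a| * (β - 1)) * S :=
            mul_le_mul_of_nonneg_left hxS
              (mul_nonneg (mul_nonneg (by norm_num) (abs_nonneg a)) (by linarith))
        _ = 2 * |a| * (β - 1) * S := by ring
    have h4b : |2 * b * (x i)| ≤ 2 * |b| * S := by
      calc |2 * b * (x i)| = (2 * |b|) * |x i| := by rw [abs_mul, abs_mul, abs_two]
        _ ≤ (2 * |b|) * S :=
            mul_le_mul_of_nonneg_left hxS (mul_nonneg (by norm_num) (abs_nonneg b))
        _ = 2 * |b| * S := by ring
    have hx3 : |(x i) ^ 3 * (‖x‖ ^ 2 + R ^ 2)⁻¹| ≤ S := by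
      rw [abs_mul, abs_pow, abs_inv, abs_of_pos hq]
      have h1 : |x i| ^ 3 ≤ S ^ 3 := pow_le_pow_left₀ (abs_nonneg _) hxS 3
      have h2 : |x i| ^ 3 * (‖x‖ ^ 2 + R ^ 2)⁻¹ ≤ S ^ 3 * (‖x‖ ^ 2 + R ^ 2)⁻¹ :=
        mul_le_mul_of_nonneg_right h1 (inv_nonneg.mpr hq.le)
      have h3 : S ^ 3 * (‖x‖ ^ 2 + R ^ 2)⁻¹ = S := by
        rw [← hS2]; field_simp
      linarith
    have h4c : |(-2 * b * β) * ((x i) ^ 3 * (‖x‖ ^ 2 + R ^ 2)⁻¹)| ≤ 2 * β * |b| * S := by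
      have habs : |(-2 * b * β : ℝ)| = 2 * β * |b| := by
        rw [abs_mul, abs_mul, abs_of_pos hβpos, show |(-2 : ℝ)| = 2 by norm_num]
        ring
      calc |(-2 * b * β) * ((x i) ^ 3 * (‖x‖ ^ 2 + R ^ 2)⁻¹)|
          = (2 * β * |b|) * |(x i) ^ 3 * (‖x‖ ^ 2 + R ^ 2)⁻¹| := by rw [abs_mul, habs]
        _ ≤ (2 * β * |b|) * S :=
            mul_le_mul_of_nonneg_left hx3
              (mul_nonneg (mul_nonneg (by norm_num) hβpos.le) (abs_nonneg b))
        _ = 2 * β * |b| * S := by ring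
    have hW : |2 * a * (1 - β) * (x i) + 2 * b * (x i)
        + (-2 * b * β) * ((x i) ^ 3 * (‖x‖ ^ 2 + R ^ 2)⁻¹)|
        ≤ (2 * |a| * (β - 1) + 2 * |b| + 2 * β * |b|) * S := by
      rw [add_mul, add_mul]
      calc |2 * a * (1 - β) * (x i) + 2 * b * (x i)
          + (-2 * b * β) * ((x i) ^ 3 * (‖x‖ ^ 2 + R ^ 2)⁻¹)|
          ≤ |2 * a * (1 - β) * (x i) + 2 * b * (x i)|
            + |(-2 * b * β) * ((x i) ^ 3 * (‖x‖ ^ 2 + R ^ 2)⁻¹)| := abs_add_le _ _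
        _ ≤ |2 * a * (1 - β) * (x i)| + |2 * b * (x i)|
            + |(-2 * b * β) * ((x i) ^ 3 * (‖x‖ ^ 2 + R ^ 2)⁻¹)| := by
            linarith [abs_add_le (2 * a * (1 - β) * (x i)) (2 * b * (x i))]
        _ ≤ 2 * |a| * (β - 1) * S + 2 * |b| * S + 2 * β * |b| * S := by
            linarith [h4a, h4b, h4c]
    have hbc : 2 * |a| * (β - 1) + 2 * |b| + 2 * β * |b| ≤ c₀ := by rw [hc₀]; linarith
    calc |(Cα * P2 * Q) * (2 * a * (1 - β) * (x i) + 2 * b * (x i)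
          + (-2 * b * β) * ((x i) ^ 3 * (‖x‖ ^ 2 + R ^ 2)⁻¹))|
        = (Cα * P2 * Q) * |2 * a * (1 - β) * (x i) + 2 * b * (x i)
          + (-2 * b * β) * ((x i) ^ 3 * (‖x‖ ^ 2 + R ^ 2)⁻¹)| := by
          rw [abs_mul, abs_of_pos hZ]
      _ ≤ (Cα * P2 * Q) * ((2 * |a| * (β - 1) + 2 * |b| + 2 * β * |b|) * S) :=
          mul_le_mul_of_nonneg_left hW hZ.le
      _ = (2 * |a| * (β - 1) + 2 * |b| + 2 * β * |b|) * ((Cα * P2 * Q) * S) := by ring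
      _ ≤ c₀ * ((Cα * P2 * Q) * S) :=
          mul_le_mul_of_nonneg_right hbc (mul_pos hZ hSpos).le
      _ = c₀ * (Cα * P2 * Q) * S := by ring
  · -- bound on |∂ₜ B|
    have hev : (fun s => B i x s) =ᶠ[nhds t]
        (fun s => (Cα * Q * (a * (‖x‖ ^ 2 + R ^ 2) + b * (x i) ^ 2))
          * (T - c * s) ^ (β - 2)) :=
      hop.mono fun s hs => by
        show B i x s = (Cα * Q * (a * (‖x‖ ^ 2 + R ^ 2) + b * (x i) ^ 2))
          * (T - c * s) ^ (β - 2)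
        rw [hBform x s hs, ← hQd]; ring
    rw [hev.deriv_eq, (hasDerivAt_tau T c _ (β - 2) t hτ.ne').deriv]
    have e8 : (T - c * t) ^ (β - 2 - 1) = P3 := by rw [hP3d]; congr 1; ring
    rw [e8, hr3]
    have hZ : 0 < Cα * P3 * Q := mul_pos (mul_pos hCα hP3p) hQp
    have hcb : 0 ≤ c * |β - 2| := mul_nonneg hcpos.le (abs_nonneg _)
    have hKc : c * |β - 2| * (|a| + |b|) ≤ c₀ := by rw [hc₀]; linarith
    calc |Cα * Q * (a * (‖x‖ ^ 2 + R ^ 2) + b * (x i) ^ 2) * (-c * (β - 2) * P3)|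
        = (c * |β - 2|) * (Cα * P3 * Q)
            * |a * (‖x‖ ^ 2 + R ^ 2) + b * (x i) ^ 2| := by
          rw [show Cα * Q * (a * (‖x‖ ^ 2 + R ^ 2) + b * (x i) ^ 2) * (-c * (β - 2) * P3)
            = ((-c * (β - 2)) * (Cα * P3 * Q))
              * (a * (‖x‖ ^ 2 + R ^ 2) + b * (x i) ^ 2) by ring, abs_mul, abs_mul,
            show |(-c * (β - 2))| = c * |β - 2| by
              rw [show (-c * (β - 2) : ℝ) = -(c * (β - 2)) by ring, abs_neg, abs_mul,
                abs_of_pos hcpos],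
            abs_of_pos hZ]
      _ ≤ (c * |β - 2|) * (Cα * P3 * Q) * ((|a| + |b|) * (‖x‖ ^ 2 + R ^ 2)) :=
          mul_le_mul_of_nonneg_left habq (mul_nonneg hcb hZ.le)
      _ = (c * |β - 2| * (|a| + |b|)) * ((Cα * P3 * Q) * (‖x‖ ^ 2 + R ^ 2)) := by ring
      _ ≤ c₀ * ((Cα * P3 * Q) * (‖x‖ ^ 2 + R ^ 2)) :=
          mul_le_mul_of_nonneg_right hKc (mul_pos hZ hq).le
      _ = c₀ * (Cα * P3 * Q) * (‖x‖ ^ 2 + R ^ 2) := by ring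
  · -- bound on |Ψ^α A|
    have hexp : (‖x‖ ^ 2 + R ^ 2) ^ (-(1 : ℝ) / 2) = S⁻¹ := by
      rw [show (-(1 : ℝ) / 2) = -((1 : ℝ) / 2) by norm_num, Real.rpow_neg hq.le, ← hSd]
    have hv6 : (Ψ x t) ^ α * A i x t
        = ((M₀ * K) * (Ψ x t)) * ((x i) * (‖x‖ ^ 2 + R ^ 2)⁻¹) := by
      rw [hΨalpha x t hτ, hAform x t hτ, ← hP1d, ← hQd, hΨx, eβ1]; ring
    have hxq : |(x i) * (‖x‖ ^ 2 + R ^ 2)⁻¹| ≤ S⁻¹ := by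
      rw [abs_mul, abs_inv, abs_of_pos hq]
      have h1 : |x i| * (‖x‖ ^ 2 + R ^ 2)⁻¹ ≤ S * (‖x‖ ^ 2 + R ^ 2)⁻¹ :=
        mul_le_mul_of_nonneg_right hxS (inv_nonneg.mpr hq.le)
      have h2 : S * (‖x‖ ^ 2 + R ^ 2)⁻¹ = S⁻¹ := by rw [← hS2]; field_simp
      linarith
    have hZ : 0 < (M₀ * K) * Ψ x t := mul_pos (mul_pos hM₀pos hKpos) hΨpos
    have hKc : M₀ * K ≤ c₀ := by rw [hc₀]; linarith
    rw [hv6, hexp]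
    calc |((M₀ * K) * (Ψ x t)) * ((x i) * (‖x‖ ^ 2 + R ^ 2)⁻¹)|
        = ((M₀ * K) * (Ψ x t)) * |(x i) * (‖x‖ ^ 2 + R ^ 2)⁻¹| := by
          rw [abs_mul, abs_of_pos hZ]
      _ ≤ ((M₀ * K) * (Ψ x t)) * S⁻¹ := mul_le_mul_of_nonneg_left hxq hZ.le
      _ = (M₀ * K) * ((Ψ x t) * S⁻¹) := by ring
      _ ≤ c₀ * ((Ψ x t) * S⁻¹) :=
          mul_le_mul_of_nonneg_right hKc
            (mul_nonneg hΨpos.le (inv_nonneg.mpr hSpos.le))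
      _ = c₀ * Ψ x t * S⁻¹ := by ring
  · -- bound on |Ψ^α B|
    have hv7 : (Ψ x t) ^ α * B i x t
        = (M₀ * (Cα * P1 * Q))
            * ((a * (‖x‖ ^ 2 + R ^ 2) + b * (x i) ^ 2) * (‖x‖ ^ 2 + R ^ 2)⁻¹) := by
      rw [hΨalpha x t hτ, hBform x t hτ, ← hP2d, ← hQd, eβ2]
      field_simp
    have h7 : |(a * (‖x‖ ^ 2 + R ^ 2) + b * (x i) ^ 2) * (‖x‖ ^ 2 + R ^ 2)⁻¹|
        ≤ |a| + |b| := by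
      rw [abs_mul, abs_inv, abs_of_pos hq]
      have h1 := mul_le_mul_of_nonneg_right habq (inv_nonneg.mpr hq.le)
      have h2 : ((|a| + |b|) * (‖x‖ ^ 2 + R ^ 2)) * (‖x‖ ^ 2 + R ^ 2)⁻¹ = |a| + |b| := by
        field_simp
      linarith
    have hZ : 0 < Cα * P1 * Q := mul_pos (mul_pos hCα hP1p) hQp
    have hZ2 : 0 < M₀ * (Cα * P1 * Q) := mul_pos hM₀pos hZ
    have hKc : M₀ * (|a| + |b|) ≤ c₀ := by rw [hc₀]; linarith
    rw [hv7, mul_div_assoc, hr1]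
    calc |(M₀ * (Cα * P1 * Q))
          * ((a * (‖x‖ ^ 2 + R ^ 2) + b * (x i) ^ 2) * (‖x‖ ^ 2 + R ^ 2)⁻¹)|
        = (M₀ * (Cα * P1 * Q))
            * |(a * (‖x‖ ^ 2 + R ^ 2) + b * (x i) ^ 2) * (‖x‖ ^ 2 + R ^ 2)⁻¹| := by
          rw [abs_mul, abs_of_pos hZ2]
      _ ≤ (M₀ * (Cα * P1 * Q)) * (|a| + |b|) := mul_le_mul_of_nonneg_left h7 hZ2.le
      _ = (M₀ * (|a| + |b|)) * (Cα * P1 * Q) := by ring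
      _ ≤ c₀ * (Cα * P1 * Q) := mul_le_mul_of_nonneg_right hKc hZ.le
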